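/- Let m > 0, k > 0 and γ, ξ₁, ξ₂ be real numbers. Then m²ξ₂⁴ − 2((km + γ²) + (mξ₁ + γ)²)ξ₂² + (mξ₁² + 2γξ₁ − k)² = 0 if and only if there exist signs s₁, s₂ ∈ {1, −1} such that ξ₂ = (s₁·|mξ₁ + γ| + s₂·√(γ² + km))/m. -/
import Mathlib


/-- The quartic equation in `ξ₂` characterizing the toral velocities `(ξ₁, ξ₂)` at which the
Hessian of the augmented Hamiltonian of the two coupled planar oscillators in a magnetic field
becomes singular holds iff `ξ₂ = (±|mξ₁ + γ| ± √(γ² + km))/m`. -/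
theorem coupled_oscillators_singular_velocities (m k γ ξ₁ ξ₂ : ℝ) (hm : 0 < m) (hk : 0 < k) :
    m ^ 2 * ξ₂ ^ 4 - 2 * ((k * m + γ ^ 2) + (m * ξ₁ + γ) ^ 2) * ξ₂ ^ 2
        + (m * ξ₁ ^ 2 + 2 * γ * ξ₁ - k) ^ 2 = 0 ↔
      ∃ s₁ s₂ : ℝ, (s₁ = 1 ∨ s₁ = -1) ∧ (s₂ = 1 ∨ s₂ = -1) ∧
        ξ₂ = (s₁ * |m * ξ₁ + γ| + s₂ * Real.sqrt (γ ^ 2 + k * m)) / m := by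
  have hm' : m ≠ 0 := ne_of_gt hm
  set a : ℝ := |m * ξ₁ + γ| with ha
  set b : ℝ := Real.sqrt (γ ^ 2 + k * m) with hb
  have ha2 : a ^ 2 = (m * ξ₁ + γ) ^ 2 := sq_abs _
  have hb2 : b ^ 2 = γ ^ 2 + k * m := Real.sq_sqrt (by positivity)
  have hfac : m ^ 2 * (m ^ 2 * ξ₂ ^ 4 - 2 * ((k * m + γ ^ 2) + (m * ξ₁ + γ) ^ 2) * ξ₂ ^ 2
      + (m * ξ₁ ^ 2 + 2 * γ * ξ₁ - k) ^ 2)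
      = (m * ξ₂ - (a + b)) * (m * ξ₂ + (a + b)) * ((m * ξ₂ - (a - b)) * (m * ξ₂ + (a - b))) := by
    linear_combination (2 * (m * ξ₂) ^ 2
        - (a ^ 2 - b ^ 2 + (m * ξ₁ + γ) ^ 2 - (γ ^ 2 + k * m))) * ha2
      + (2 * (m * ξ₂) ^ 2
        + (a ^ 2 - b ^ 2 + (m * ξ₁ + γ) ^ 2 - (γ ^ 2 + k * m))) * hb2
  constructor
  · intro h
    have h0 : (m * ξ₂ - (a + b)) * (m * ξ₂ + (a + b))
        * ((m * ξ₂ - (a - b)) * (m * ξ₂ + (a - b))) = 0 := by rw [← hfac, h]; ring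
    rcases mul_eq_zero.1 h0 with h1 | h1
    · rcases mul_eq_zero.1 h1 with h2 | h2
      · exact ⟨1, 1, Or.inl rfl, Or.inl rfl, by field_simp; linarith⟩
      · exact ⟨-1, -1, Or.inr rfl, Or.inr rfl, by field_simp; linarith⟩
    · rcases mul_eq_zero.1 h1 with h2 | h2
      · exact ⟨1, -1, Or.inl rfl, Or.inr rfl, by field_simp; linarith⟩
      · exact ⟨-1, 1, Or.inr rfl, Or.inl rfl, by field_simp; linarith⟩
  · rintro ⟨s₁, s₂, hs₁, hs₂, hξ⟩
    have hx : m * ξ₂ = s₁ * a + s₂ * b := by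
      field_simp at hξ; linarith
    have h0 : (m * ξ₂ - (a + b)) * (m * ξ₂ + (a + b))
        * ((m * ξ₂ - (a - b)) * (m * ξ₂ + (a - b))) = 0 := by
      rcases hs₁ with rfl | rfl <;> rcases hs₂ with rfl | rfl <;> rw [hx] <;> ring
    have := hfac.trans h0
    have hm2 : (m : ℝ) ^ 2 ≠ 0 := pow_ne_zero _ hm'
    exact (mul_eq_zero.1 this).resolve_left hm2
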